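/- Let γ₀, γ₁ ≠ 0, s > 0, and set p(s) = (s²+(γ₀+γ₁)²)(s²+(γ₀-γ₁)²) and q±(s) = -(√(s²+(γ₀+γ₁)²) ± √(s²+(γ₀-γ₁)²))²/(4γ₀γ₁). Then for every natural number n, (M₁M₀)ⁿ = (1/2){q₊ⁿ+q₋ⁿ + ((s²-γ₀²+γ₁²)/√p)(q₊ⁿ-q₋ⁿ)}E₁₁ + i(sγ₀/√p)(q₊ⁿ-q₋ⁿ)E₁₂ - i(sγ₀/√p)(q₊ⁿ-q₋ⁿ)E₂₁ + (1/2){q₊ⁿ+q₋ⁿ - ((s²-γ₀²+γ₁²)/√p)(q₊ⁿ-q₋ⁿ)}E₂₂, where Eⱼₖ are the 2×2 matrix units. -/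

import Mathlib

set_option maxHeartbeats 1600000

theorem transfer_matrix_pow (γ₀ γ₁ s : ℝ) (h₀ : γ₀ ≠ 0) (h₁ : γ₁ ≠ 0) (hs : 0 < s)
    (M₀ M₁ : Matrix (Fin 2) (Fin 2) ℂ)
    (hM₀ : M₀ = !![Complex.I * s / γ₁, -(γ₀ / γ₁ : ℝ); 1, 0])
    (hM₁ : M₁ = !![Complex.I * s / γ₀, -(γ₁ / γ₀ : ℝ); 1, 0])
    (p qp qm : ℝ)
    (hp : p = (s^2 + (γ₀ + γ₁)^2) * (s^2 + (γ₀ - γ₁)^2))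
    (hqp : qp = -((Real.sqrt (s^2 + (γ₀ + γ₁)^2) + Real.sqrt (s^2 + (γ₀ - γ₁)^2))^2 / (4 * γ₀ * γ₁)))
    (hqm : qm = -((Real.sqrt (s^2 + (γ₀ + γ₁)^2) - Real.sqrt (s^2 + (γ₀ - γ₁)^2))^2 / (4 * γ₀ * γ₁))) :
    ∀ n : ℕ, (M₁ * M₀) ^ n =
      ((1 / 2 : ℂ) * ((qp : ℂ)^n + (qm : ℂ)^n
          + ((s^2 - γ₀^2 + γ₁^2 : ℝ) / (Real.sqrt p : ℝ) : ℝ) * ((qp : ℂ)^n - (qm : ℂ)^n)))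
        • Matrix.single 0 0 (1 : ℂ)
      + (Complex.I * ((s * γ₀ / Real.sqrt p : ℝ) : ℂ) * ((qp : ℂ)^n - (qm : ℂ)^n))
        • Matrix.single 0 1 (1 : ℂ)
      - (Complex.I * ((s * γ₀ / Real.sqrt p : ℝ) : ℂ) * ((qp : ℂ)^n - (qm : ℂ)^n))
        • Matrix.single 1 0 (1 : ℂ)
      + ((1 / 2 : ℂ) * ((qp : ℂ)^n + (qm : ℂ)^n
          - ((s^2 - γ₀^2 + γ₁^2 : ℝ) / (Real.sqrt p : ℝ) : ℝ) * ((qp : ℂ)^n - (qm : ℂ)^n)))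
        • Matrix.single 1 1 (1 : ℂ) := by
  -- real preliminaries
  have hX : (0:ℝ) < s^2 + (γ₀+γ₁)^2 := by positivity
  have hY : (0:ℝ) < s^2 + (γ₀-γ₁)^2 := by positivity
  set a := Real.sqrt (s^2+(γ₀+γ₁)^2) with ha_def
  set b := Real.sqrt (s^2+(γ₀-γ₁)^2) with hb_def
  have ha2 : a^2 = s^2+(γ₀+γ₁)^2 := Real.sq_sqrt hX.le
  have hb2 : b^2 = s^2+(γ₀-γ₁)^2 := Real.sq_sqrt hY.le
  have hapos : 0 < a := Real.sqrt_pos.mpr hX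
  have hbpos : 0 < b := Real.sqrt_pos.mpr hY
  have hr : Real.sqrt p = a * b := by
    rw [hp, ha_def, hb_def, Real.sqrt_mul hX.le]
  have hsum : qp + qm = -((s^2+γ₀^2+γ₁^2)/(γ₀*γ₁)) := by
    rw [hqp, hqm]; field_simp; linear_combination (-2)*ha2 + (-2)*hb2
  have hprod : qp * qm = 1 := by
    rw [hqp, hqm]; field_simp
    linear_combination (a^2 - b^2 + (s^2+(γ₀+γ₁)^2) - (s^2+(γ₀-γ₁)^2))*ha2
      - (a^2 - b^2 + (s^2+(γ₀+γ₁)^2) - (s^2+(γ₀-γ₁)^2))*hb2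
  have hdiff : qm - qp = a*b/(γ₀*γ₁) := by
    rw [hqp, hqm]; field_simp; ring
  have hdne : qm - qp ≠ 0 := by
    rw [hdiff]
    exact div_ne_zero (by positivity) (mul_ne_zero h₀ h₁)
  have hrx : Real.sqrt p = γ₀*γ₁*(qm - qp) := by
    rw [hr, hdiff]; field_simp
  -- complex versions
  have hg0 : (γ₀:ℂ) ≠ 0 := Complex.ofReal_ne_zero.mpr h₀
  have hg1 : (γ₁:ℂ) ≠ 0 := Complex.ofReal_ne_zero.mpr h₁
  have hTC : (qp:ℂ) + (qm:ℂ) = -((s^2+γ₀^2+γ₁^2)/((γ₀:ℂ)*γ₁)) := by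
    have := congrArg (Complex.ofReal) hsum; push_cast at this; exact this
  have h1C : (qp:ℂ) * (qm:ℂ) = 1 := by
    have := congrArg (Complex.ofReal) hprod; push_cast at this; exact this
  have hdCne : (qm:ℂ) - (qp:ℂ) ≠ 0 := by
    rw [show (qm:ℂ) - qp = ((qm - qp : ℝ) : ℂ) by push_cast; ring]
    exact Complex.ofReal_ne_zero.mpr hdne
  have hdCne' : (qp:ℂ) - (qm:ℂ) ≠ 0 := by
    intro h; exact hdCne (by linear_combination -h)
  have hRC : ((Real.sqrt p : ℝ):ℂ) = (γ₀:ℂ)*γ₁*((qm:ℂ) - qp) := by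
    have := congrArg (Complex.ofReal) hrx; push_cast at this; exact this
  -- the transfer matrix
  set Amat : Matrix (Fin 2) (Fin 2) ℂ :=
    !![-(((s:ℂ)^2+(γ₁:ℂ)^2)/((γ₀:ℂ)*γ₁)), -(Complex.I*s/γ₁); Complex.I*s/γ₁, -((γ₀:ℂ)/γ₁)]
    with hAmat_def
  have hA : M₁ * M₀ = Amat := by
    rw [hM₀, hM₁, hAmat_def]
    ext i j
    fin_cases i <;> fin_cases j <;>
      simp [Matrix.mul_apply, Fin.sum_univ_two] <;> field_simp <;>
      first
        | ring1
        | (ring_nf; simp only [Complex.I_sq]; first | ring1 | norm_num)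
        | (simp only [Complex.I_sq]; ring1)
  -- Cayley-Hamilton for Amat
  have hAA : Amat * Amat = ((qp:ℂ)+(qm:ℂ)) • Amat - 1 := by
    rw [hTC, hAmat_def]
    ext i j
    fin_cases i <;> fin_cases j <;>
      simp [Matrix.mul_apply, Fin.sum_univ_two, Matrix.one_apply, Matrix.smul_apply] <;> field_simp <;>
      first
        | ring1
        | (ring_nf; simp only [Complex.I_sq]; first | ring1 | norm_num)
        | (simp only [Complex.I_sq]; ring1)
  -- eigenprojections
  set d : ℂ := (qp:ℂ) - (qm:ℂ) with hd_def
  set U : Matrix (Fin 2) (Fin 2) ℂ := d⁻¹ • (Amat - (qm:ℂ) • 1) with hU_def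
  set V : Matrix (Fin 2) (Fin 2) ℂ := d⁻¹ • ((qp:ℂ) • 1 - Amat) with hV_def
  have hUV : U + V = 1 := by
    rw [hU_def, hV_def, ← smul_add]
    have h2 : (Amat - (qm:ℂ) • 1) + ((qp:ℂ) • 1 - Amat) = d • (1 : Matrix (Fin 2) (Fin 2) ℂ) := by
      rw [hd_def, sub_smul]; module
    rw [h2, smul_smul, inv_mul_cancel₀ hdCne', one_smul]
  have hAU : Amat * U = (qp:ℂ) • U := by
    rw [hU_def, Matrix.mul_smul, Matrix.mul_sub, Matrix.mul_smul, Matrix.mul_one, hAA]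
    rw [smul_comm]
    congr 1
    rw [smul_sub, smul_smul, h1C, one_smul]
    module
  have hAV : Amat * V = (qm:ℂ) • V := by
    rw [hV_def, Matrix.mul_smul, Matrix.mul_sub, Matrix.mul_smul, Matrix.mul_one, hAA]
    rw [smul_comm]
    congr 1
    rw [smul_sub, smul_smul, mul_comm, h1C, one_smul]
    module
  have key : ∀ n : ℕ, (M₁ * M₀) ^ n = ((qp:ℂ)^n) • U + ((qm:ℂ)^n) • V := by
    intro n
    induction n with
    | zero => rw [pow_zero, pow_zero, pow_zero, one_smul, one_smul, hUV]
    | succ n ih =>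
        rw [pow_succ', ih, hA]
        simp only [Matrix.mul_add, Matrix.mul_smul, hAU, hAV, smul_smul, pow_succ]
  intro n
  rw [key n]
  have hdne2 : d ≠ 0 := hdCne'
  have hTC' : (γ₀:ℂ)*γ₁*((qp:ℂ)+(qm:ℂ)) = -((s:ℂ)^2+(γ₀:ℂ)^2+(γ₁:ℂ)^2) := by
    rw [hTC]; field_simp
  rw [hU_def, hV_def, hAmat_def, hd_def]
  push_cast
  rw [hRC]
  ext i j
  fin_cases i <;> fin_cases j <;>
    simp [Matrix.single, Matrix.smul_apply, Matrix.sub_apply, Matrix.one_apply,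
      Matrix.add_apply] <;>
    field_simp [show (qp:ℂ) - (qm:ℂ) ≠ 0 from hdCne'] <;>
    first
      | ring1
      | linear_combination ((γ₀:ℂ)*γ₁)*((qm:ℂ)-(qp:ℂ))*((qm:ℂ)^n-(qp:ℂ)^n)*hTC'
      | linear_combination ((qm:ℂ)-(qp:ℂ))*(γ₁:ℂ)*((qm:ℂ)^n-(qp:ℂ)^n)*hTC'
      | linear_combination ((qp:ℂ)-(qm:ℂ))*((qp:ℂ)^n-(qm:ℂ)^n)*hTC'
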